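/- Let A = exp(𝔞) with 𝔞 abelian in Sym(V), acting linearly on V with weights α_1,...,α_n relative to an orthonormal eigenbasis, and let x ∈ V with support I. Then the orbit A·x is closed in V if and only if 0 ∈ C^o_I = {∑_{i∈I} s_i α_i : s_i > 0}; equivalently, A·x is closed if and only if A·x meets the zero set of the gradient map μ_𝔞. -/

import Mathlib

set_option linter.unusedSectionVars false

open RealInnerProductSpace Finset Classical NormedSpace Filter Topology

section KN


variable {V : Type*} [NormedAddCommGroup V] [InnerProductSpace ℝ V] [FiniteDimensional ℝ V]
    {n : ℕ} {𝔞 : Submodule ℝ (V →L[ℝ] V)}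
    (v : OrthonormalBasis (Fin n) ℝ V) (α : Fin n → (𝔞 →ₗ[ℝ] ℝ)) (x : V)

-- exp applied to eigenvector
lemma exp_eigen (T : V →L[ℝ] V) (w : V) (c : ℝ) (h : T w = c • w) :
    NormedSpace.exp T w = Real.exp c • w := by
  have hpow : ∀ k : ℕ, (T ^ k) w = c ^ k • w := by
    intro k
    induction k with
    | zero => simp
    | succ k ih =>
      rw [pow_succ, ContinuousLinearMap.mul_apply, h, map_smul, ih, smul_smul, ← pow_succ']
  have hs : Summable fun k : ℕ => ((Nat.factorial k : ℝ))⁻¹ • T ^ k := expSeries_summable' T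
  have h1 : NormedSpace.exp T w = ∑' k : ℕ, (((Nat.factorial k : ℝ))⁻¹ • T ^ k) w := by
    rw [exp_eq_tsum ℝ]
    exact ((ContinuousLinearMap.apply ℝ V w).map_tsum hs)
  rw [h1]
  have h2 : ∀ k : ℕ, (((Nat.factorial k : ℝ))⁻¹ • T ^ k) w
      = (((Nat.factorial k : ℝ))⁻¹ * c ^ k) • w := by
    intro k; rw [ContinuousLinearMap.smul_apply, hpow, smul_smul]
  simp_rw [h2]
  rw [Summable.tsum_smul_const]
  · congr 1
    rw [Real.exp_eq_exp_ℝ, exp_eq_tsum ℝ]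
    simp [smul_eq_mul]
  · have := expSeries_summable' (𝕂 := ℝ) c
    simpa [smul_eq_mul] using this

-- coordinate of a sum w.r.t. orthonormal basis
lemma coord_sum (c : Fin n → ℝ) (i : Fin n) : ⟪∑ j, c j • v j, v i⟫ = c i := by
  rw [real_inner_comm, inner_sum]
  simp only [real_inner_smul_right]
  rw [Finset.sum_eq_single i]
  · rw [orthonormal_iff_ite.mp v.orthonormal i i]; simp
  · intro j _ hj
    rw [orthonormal_iff_ite.mp v.orthonormal i j]
    simp [Ne.symm hj]
  · simp

variable (heig : ∀ (ξ : 𝔞) (i : Fin n), (ξ : V →L[ℝ] V) (v i) = α i ξ • v i)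
include heig

lemma action_coords (ξ : 𝔞) (w : V) :
    (ξ : V →L[ℝ] V) w = ∑ i, (α i ξ * ⟪w, v i⟫) • v i := by
  conv_lhs => rw [← v.sum_repr' w]
  rw [map_sum]
  refine Finset.sum_congr rfl fun i _ => ?_
  rw [map_smul, heig, smul_smul, real_inner_comm, mul_comm]

lemma exp_coords (ξ : 𝔞) (w : V) :
    NormedSpace.exp (ξ : V →L[ℝ] V) w = ∑ i, (Real.exp (α i ξ) * ⟪w, v i⟫) • v i := by
  conv_lhs => rw [← v.sum_repr' w]
  rw [map_sum]
  refine Finset.sum_congr rfl fun i _ => ?_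
  rw [map_smul, exp_eigen _ _ _ (heig ξ i), smul_smul, real_inner_comm, mul_comm]

lemma mu_formula (ξ : 𝔞) (w : V) :
    ⟪(ξ : V →L[ℝ] V) w, w⟫ = ∑ i, α i ξ * ⟪w, v i⟫ ^ 2 := by
  rw [← v.sum_inner_mul_inner ((ξ : V →L[ℝ] V) w) w]
  refine Finset.sum_congr rfl fun i _ => ?_
  rw [action_coords v α heig, coord_sum, real_inner_comm (v i) w]
  ring

lemma normsq_formula (w : V) : ‖w‖ ^ 2 = ∑ i, ⟪w, v i⟫ ^ 2 := by
  rw [← real_inner_self_eq_norm_sq, ← v.sum_inner_mul_inner w w]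
  refine Finset.sum_congr rfl fun i _ => ?_
  rw [real_inner_comm (v i) w]; ring





lemma cone_to_closed
    (hcone : ∃ s : Fin n → ℝ, (∀ i, ⟪x, v i⟫ ≠ 0 → 0 < s i) ∧
        ∀ ξ : 𝔞, (0:ℝ) = ∑ i, (if ⟪x, v i⟫ ≠ 0 then s i * α i ξ else 0)) :
    IsClosed {y : V | ∃ ξ : 𝔞, y = NormedSpace.exp (ξ : V →L[ℝ] V) x} := by
  obtain ⟨s, hs, hzero⟩ := hcone
  apply IsSeqClosed.isClosed
  intro u y hu hy
  choose ξ hξ using hu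
  -- coordinates of u k
  have hcoord : ∀ k i, ⟪u k, v i⟫ = Real.exp (α i (ξ k)) * ⟪x, v i⟫ := by
    intro k i
    rw [hξ k, exp_coords v α heig, coord_sum v]
  have hconv : ∀ i, Tendsto (fun k => ⟪u k, v i⟫) atTop (𝓝 ⟪y, v i⟫) := by
    intro i
    exact (Continuous.inner continuous_id continuous_const).continuousAt.tendsto.comp hy
  -- for i in support, e^{α i ξ k} → ⟪y,v i⟫/⟪x,v i⟫
  have hexp : ∀ i, ⟪x, v i⟫ ≠ 0 →
      Tendsto (fun k => Real.exp (α i (ξ k))) atTop (𝓝 (⟪y, v i⟫ / ⟪x, v i⟫)) := by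
    intro i hi
    have := (hconv i).div_const ⟪x, v i⟫
    simpa [hcoord, mul_div_assoc, div_self hi] using this
  -- the limits are positive
  have hpos : ∀ i, ⟪x, v i⟫ ≠ 0 → 0 < ⟪y, v i⟫ / ⟪x, v i⟫ := by
    intro i hi
    rcases lt_or_eq_of_le (ge_of_tendsto' (hexp i hi) fun k => (Real.exp_pos _).le) with h | h
    · exact h
    · -- limit is zero: derive a contradiction
      exfalso
      have htendsBot : Tendsto (fun k => α i (ξ k)) atTop atBot := by
        rw [← Real.tendsto_exp_comp_nhds_zero]
        have := hexp i hi
        rwa [← h] at this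
      -- each term bounded above
      have hbdd : ∀ j : Fin n, ∃ C : ℝ, ∀ k,
          (if ⟪x, v j⟫ ≠ 0 then s j * α j (ξ k) else 0) ≤ C := by
        intro j
        by_cases hj : ⟪x, v j⟫ ≠ 0
        · obtain ⟨M, hM⟩ := (hexp j hj).bddAbove_range
          refine ⟨s j * Real.log M, fun k => ?_⟩
          rw [if_pos hj]
          refine mul_le_mul_of_nonneg_left ?_ (hs j hj).le
          have h1 : Real.exp (α j (ξ k)) ≤ M := hM ⟨k, rfl⟩
          have := Real.log_le_log (Real.exp_pos _) h1
          rwa [Real.log_exp] at this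
        · exact ⟨0, fun k => by simp [hj]⟩
      choose C hC using hbdd
      -- the i-th term tends to -infty
      have hterm : Tendsto (fun k => s i * α i (ξ k)) atTop atBot :=
        Tendsto.const_mul_atBot (hs i hi) htendsBot
      have hlow : ∀ k, -(∑ j ∈ Finset.univ.erase i, C j) ≤ s i * α i (ξ k) := by
        intro k
        have h0 := hzero (ξ k)
        rw [← Finset.add_sum_erase _ _ (Finset.mem_univ i)] at h0
        rw [if_pos hi] at h0
        have hsum : ∑ j ∈ Finset.univ.erase i, (if ⟪x, v j⟫ ≠ 0 then s j * α j (ξ k) else 0)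
            ≤ ∑ j ∈ Finset.univ.erase i, C j :=
          Finset.sum_le_sum fun j _ => hC j k
        linarith
      obtain ⟨k, hk⟩ := (hterm.eventually (eventually_lt_atBot
        (-(∑ j ∈ Finset.univ.erase i, C j)))).exists
      exact absurd (hlow k) (not_le.mpr hk)
  -- construct the limit parameter via closedness of the range of a linear map
  let L : 𝔞 →ₗ[ℝ] (Fin n → ℝ) :=
    { toFun := fun ξ' i => if ⟪x, v i⟫ ≠ 0 then α i ξ' else 0
      map_add' := by
        intro a b; funext i; by_cases h : ⟪x, v i⟫ = 0 <;> simp [h]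
      map_smul' := by
        intro c a; funext i; by_cases h : ⟪x, v i⟫ = 0 <;> simp [h] }
  have hrange : IsClosed ((LinearMap.range L : Submodule ℝ (Fin n → ℝ)) : Set (Fin n → ℝ)) :=
    Submodule.closed_of_finiteDimensional _
  set t : Fin n → ℝ := fun i => if ⟪x, v i⟫ ≠ 0 then Real.log (⟪y, v i⟫ / ⟪x, v i⟫) else 0
    with ht_def
  have htend : Tendsto (fun k => L (ξ k)) atTop (𝓝 t) := by
    rw [tendsto_pi_nhds]
    intro i
    by_cases hi : ⟪x, v i⟫ ≠ 0
    · have hlog := (Real.continuousAt_log (ne_of_gt (hpos i hi))).tendsto.comp (hexp i hi)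
      simp only [L, LinearMap.coe_mk, AddHom.coe_mk, ht_def, if_pos hi]
      simpa [Function.comp_def, Real.log_exp] using hlog
    · simp only [L, LinearMap.coe_mk, AddHom.coe_mk, ht_def, if_neg hi]
      exact tendsto_const_nhds
  have htmem : t ∈ (LinearMap.range L : Submodule ℝ (Fin n → ℝ)) :=
    hrange.mem_of_tendsto htend (Eventually.of_forall fun k => ⟨ξ k, rfl⟩)
  obtain ⟨ξ', hξ'⟩ := htmem
  refine ⟨ξ', ?_⟩
  rw [exp_coords v α heig]
  conv_lhs => rw [← v.sum_repr' y]
  refine Finset.sum_congr rfl fun i _ => ?_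
  rw [real_inner_comm]
  congr 1
  by_cases hi : ⟪x, v i⟫ ≠ 0
  · have h1 : α i ξ' = Real.log (⟪y, v i⟫ / ⟪x, v i⟫) := by
      have := congr_fun hξ' i
      simpa [L, hi, ht_def] using this
    rw [h1, Real.exp_log (hpos i hi), div_mul_cancel₀ _ hi]
  · push_neg at hi
    have hy0 : Tendsto (fun k => ⟪u k, v i⟫) atTop (𝓝 0) := by
      simpa [hcoord, hi] using tendsto_const_nhds (α := ℕ) (x := (0:ℝ))
    have := tendsto_nhds_unique (hconv i) hy0
    rw [this, hi, mul_zero]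





lemma crit_to_cone
    (hcrit : ∃ y ∈ {y : V | ∃ ξ : 𝔞, y = NormedSpace.exp (ξ : V →L[ℝ] V) x},
        ∀ ξ : 𝔞, ⟪(ξ : V →L[ℝ] V) y, y⟫ = 0) :
    ∃ s : Fin n → ℝ, (∀ i, ⟪x, v i⟫ ≠ 0 → 0 < s i) ∧
        ∀ ξ : 𝔞, (0:ℝ) = ∑ i, (if ⟪x, v i⟫ ≠ 0 then s i * α i ξ else 0) := by
  obtain ⟨y, ⟨ξ₀, hy⟩, hmu⟩ := hcrit
  have hycoord : ∀ i, ⟪y, v i⟫ = Real.exp (α i ξ₀) * ⟪x, v i⟫ := by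
    intro i; rw [hy, exp_coords v α heig, coord_sum v]
  refine ⟨fun i => Real.exp (α i ξ₀) ^ 2 * ⟪x, v i⟫ ^ 2, fun i hi => ?_, fun ξ => ?_⟩
  · have h1 : (0:ℝ) < Real.exp (α i ξ₀) ^ 2 := pow_pos (Real.exp_pos _) 2
    have h2 : (0:ℝ) < ⟪x, v i⟫ ^ 2 := by positivity
    exact mul_pos h1 h2
  · have := hmu ξ
    rw [mu_formula v α heig] at this
    have hsum : ∑ i, (if ⟪x, v i⟫ ≠ 0 then
        (fun i => Real.exp (α i ξ₀) ^ 2 * ⟪x, v i⟫ ^ 2) i * α i ξ else 0)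
        = ∑ i, α i ξ * ⟪y, v i⟫ ^ 2 := by
      refine Finset.sum_congr rfl fun i _ => ?_
      by_cases hi : ⟪x, v i⟫ ≠ 0
      · rw [if_pos hi, hycoord, mul_pow]
        ring
      · push_neg at hi
        rw [if_neg (by simp [hi]), hycoord, hi]
        ring
    rw [hsum]
    exact this.symm

lemma closed_to_crit
    (habelian : ∀ ξ η : 𝔞, (ξ : V →L[ℝ] V) * η = (η : V →L[ℝ] V) * ξ)
    (hclosed : IsClosed {y : V | ∃ ξ : 𝔞, y = NormedSpace.exp (ξ : V →L[ℝ] V) x}) :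
    ∃ y ∈ {y : V | ∃ ξ : 𝔞, y = NormedSpace.exp (ξ : V →L[ℝ] V) x},
        ∀ ξ : 𝔞, ⟪(ξ : V →L[ℝ] V) y, y⟫ = 0 := by
  set S := {y : V | ∃ ξ : 𝔞, y = NormedSpace.exp (ξ : V →L[ℝ] V) x} with hS
  have hxS : x ∈ S := ⟨0, by simp [exp_zero]⟩
  -- the minimizer of the norm on the orbit
  have hK : IsCompact (S ∩ Metric.closedBall 0 ‖x‖) := by
    exact Metric.isCompact_of_isClosed_isBounded
      (hclosed.inter Metric.isClosed_closedBall)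
      (Metric.isBounded_closedBall.subset Set.inter_subset_right)
  have hKne : (S ∩ Metric.closedBall 0 ‖x‖).Nonempty :=
    ⟨x, hxS, by simp [Metric.mem_closedBall]⟩
  obtain ⟨y, hyK, hmin'⟩ := hK.exists_isMinOn hKne (continuous_norm.continuousOn (s := S ∩ Metric.closedBall 0 ‖x‖))
  have hmin : ∀ z ∈ S ∩ Metric.closedBall 0 ‖x‖, ‖y‖ ≤ ‖z‖ := fun z hz => hmin' hz
  have hyS : y ∈ S := hyK.1
  have hminS : ∀ z ∈ S, ‖y‖ ≤ ‖z‖ := by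
    intro z hz
    by_cases hb : ‖z‖ ≤ ‖x‖
    · exact hmin z ⟨hz, by simpa [Metric.mem_closedBall] using hb⟩
    · push_neg at hb
      have h1 : ‖y‖ ≤ ‖x‖ := hmin x ⟨hxS, by simp⟩
      linarith
  obtain ⟨η, hη⟩ := hyS
  refine ⟨y, hyK.1, fun ξ => ?_⟩
  -- the function g
  set g : ℝ → ℝ := fun t => ∑ i, Real.exp (2 * α i ξ * t) * ⟪y, v i⟫ ^ 2 with hg
  have horb : ∀ t : ℝ, NormedSpace.exp ((t • ξ : 𝔞) : V →L[ℝ] V) y ∈ S := by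
    intro t
    refine ⟨t • ξ + η, ?_⟩
    rw [hη, ← ContinuousLinearMap.comp_apply, ← ContinuousLinearMap.mul_def]
    rw [Submodule.coe_add]
    rw [exp_add_of_commute_of_mem_ball (𝕂 := ℝ) (habelian (t • ξ) η)
      ((expSeries_radius_eq_top ℝ (V →L[ℝ] V)).symm ▸ edist_lt_top _ _)
      ((expSeries_radius_eq_top ℝ (V →L[ℝ] V)).symm ▸ edist_lt_top _ _)]
  have hgval : ∀ t : ℝ, g t = ‖NormedSpace.exp ((t • ξ : 𝔞) : V →L[ℝ] V) y‖ ^ 2 := by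
    intro t
    rw [normsq_formula v α heig, exp_coords v α heig]
    refine Finset.sum_congr rfl fun i _ => ?_
    rw [coord_sum v]
    have h1 : α i (t • ξ) = t * α i ξ := by simp
    have h2 : 2 * α i ξ * t = t * α i ξ + t * α i ξ := by ring
    rw [h1, h2, Real.exp_add, mul_pow]
    ring
  have hglb : ∀ t : ℝ, g 0 ≤ g t := by
    intro t
    have h0 : g 0 = ‖y‖ ^ 2 := by
      rw [hgval 0]
      congr 1
      congr 1
      rw [zero_smul]
      simp [exp_zero]
    rw [h0, hgval t]
    have := hminS _ (horb t)
    exact pow_le_pow_left₀ (norm_nonneg _) this 2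
  have hloc : IsLocalMin g 0 := Filter.Eventually.of_forall hglb
  have hderiv : HasDerivAt g (∑ i, 2 * α i ξ * ⟪y, v i⟫ ^ 2) 0 := by
    have : ∀ i ∈ Finset.univ, HasDerivAt (fun t => Real.exp (2 * α i ξ * t) * ⟪y, v i⟫ ^ 2)
        (2 * α i ξ * ⟪y, v i⟫ ^ 2) 0 := by
      intro i _
      have h1 : HasDerivAt (fun t : ℝ => 2 * α i ξ * t) (2 * α i ξ) 0 := by
        simpa using (hasDerivAt_id (0:ℝ)).const_mul (2 * α i ξ)
      have h2 := (Real.hasDerivAt_exp (2 * α i ξ * 0)).comp 0 h1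
      have h3 := h2.mul_const (⟪y, v i⟫ ^ 2)
      convert h3 using 1
      · rfl
      · rfl
      · rfl
      simp [Function.comp]
    exact HasDerivAt.fun_sum this
  have hzero := hloc.hasDerivAt_eq_zero hderiv
  rw [mu_formula v α heig]
  have : ∑ i, 2 * α i ξ * ⟪y, v i⟫ ^ 2 = 2 * ∑ i, α i ξ * ⟪y, v i⟫ ^ 2 := by
    rw [Finset.mul_sum]; exact Finset.sum_congr rfl fun i _ => by ring
  rw [this] at hzero
  linarith


end KN

/-- The orbit `A·x` is closed if and only if `0 ∈ C^o_I` (strictly positive combinations of the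
weights on the support of `x`), and equivalently if and only if the orbit meets the zero set of
the gradient map `μ_𝔞`. -/
theorem orbit_closed_iff
    (V : Type*) [NormedAddCommGroup V] [InnerProductSpace ℝ V] [FiniteDimensional ℝ V]
    (n : ℕ) (𝔞 : Submodule ℝ (V →L[ℝ] V))
    (habelian : ∀ ξ η : 𝔞, (ξ : V →L[ℝ] V) * η = (η : V →L[ℝ] V) * ξ)
    (v : OrthonormalBasis (Fin n) ℝ V) (α : Fin n → (𝔞 →ₗ[ℝ] ℝ))
    (heig : ∀ (ξ : 𝔞) (i : Fin n), (ξ : V →L[ℝ] V) (v i) = α i ξ • v i)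
    (x : V)
    (orbit : Set V)
    (horbit : orbit = {y : V | ∃ ξ : 𝔞, y = NormedSpace.exp (ξ : V →L[ℝ] V) x}) :
    (IsClosed orbit ↔
      (0 : 𝔞 →ₗ[ℝ] ℝ) ∈ {φ : 𝔞 →ₗ[ℝ] ℝ | ∃ s : Fin n → ℝ, (∀ i, ⟪x, v i⟫ ≠ 0 → 0 < s i) ∧
        ∀ ξ : 𝔞, φ ξ = ∑ i, (if ⟪x, v i⟫ ≠ 0 then s i * α i ξ else 0)}) ∧
    (IsClosed orbit ↔ ∃ y ∈ orbit, ∀ ξ : 𝔞, ⟪(ξ : V →L[ℝ] V) y, y⟫ = 0) := by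
  subst horbit
  constructor
  · constructor
    · intro hc
      obtain ⟨s, hs1, hs2⟩ := crit_to_cone v α x heig
        (closed_to_crit v α x heig habelian hc)
      exact ⟨s, hs1, fun ξ => by simpa using hs2 ξ⟩
    · rintro ⟨s, hs1, hs2⟩
      exact cone_to_closed v α x heig ⟨s, hs1, fun ξ => by simpa using hs2 ξ⟩
  · constructor
    · exact closed_to_crit v α x heig habelian
    · intro hcrit
      exact cone_to_closed v α x heig (crit_to_cone v α x heig hcrit)
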